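/- Let H be a real Hilbert space, let I be a nonempty finite index set and, for every i ∈ I, let G_i be a real Hilbert space, let V_i be a closed linear subspace of G_i, let r_i ∈ G_i, let L_i : H → G_i be a nonzero bounded linear operator, and let α_i > 0. Define h : H → ℝ by h(x) = (1/2) Σ_{i∈I} α_i d_{V_i}(L_i x − r_i)². Then h is convex and Fréchet differentiable, for every x ∈ H its gradient is ∇h(x) = Σ_{i∈I} α_i L_i*( proj_{V_i^⊥}(L_i x − r_i) ), and ∇h is Lipschitz continuous with constant β = Σ_{i∈I} α_i ‖L_i‖². -/

import Mathlib

open scoped RealInnerProductSpace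

lemma aux_infDist_eq {G : Type*} [NormedAddCommGroup G] [InnerProductSpace ℝ G]
    (V : Submodule ℝ G) [V.HasOrthogonalProjection] (y : G) :
    Metric.infDist y (V : Set G) = ‖(Vᗮ.orthogonalProjectionOnto y : G)‖ := by
  rw [Metric.infDist_eq_iInf, Submodule.coe_orthogonalProjectionOnto_apply,
    Submodule.starProjection_orthogonal_val, Submodule.starProjection_minimal]
  simp [dist_eq_norm]

lemma aux_inner_proj {G : Type*} [NormedAddCommGroup G] [InnerProductSpace ℝ G]
    (K : Submodule ℝ G) [K.HasOrthogonalProjection] (u z : G) :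
    ⟪(K.orthogonalProjectionOnto u : G), z⟫ =
      ⟪(K.orthogonalProjectionOnto u : G), (K.orthogonalProjectionOnto z : G)⟫ := by
  have h1 : ⟪(K.orthogonalProjectionOnto u : G), z⟫ = ⟪u, (K.orthogonalProjectionOnto z : G)⟫ :=
    K.inner_starProjection_left_eq_right u z
  have h2 : ⟪(K.orthogonalProjectionOnto u : G), (K.orthogonalProjectionOnto z : G)⟫ =
      ⟪u, (K.orthogonalProjectionOnto (K.orthogonalProjectionOnto z : G) : G)⟫ :=
    K.inner_starProjection_left_eq_right u ((K.orthogonalProjectionOnto z : G))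
  rw [h1, h2, Submodule.orthogonalProjectionOnto_mem_subspace_eq_self]

lemma aux_convexOn_sum {ι E : Type*} [AddCommGroup E] [Module ℝ E]
    (s : Finset ι) (f : ι → E → ℝ) (hf : ∀ i ∈ s, ConvexOn ℝ Set.univ (f i)) :
    ConvexOn ℝ Set.univ (fun x => ∑ i ∈ s, f i x) := by
  classical
  induction s using Finset.cons_induction with
  | empty => simpa using convexOn_const (0 : ℝ) convex_univ
  | cons i s hi ih =>
    simp only [Finset.sum_cons]
    exact (hf i (Finset.mem_cons_self i s)).add
      (ih fun j hj => hf j (Finset.mem_cons_of_mem hj))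

lemma aux_convexOn_norm_sq {E F : Type*} [NormedAddCommGroup E] [NormedSpace ℝ E]
    [NormedAddCommGroup F] [NormedSpace ℝ F] (A : E →ᵃ[ℝ] F) :
    ConvexOn ℝ Set.univ (fun x => ‖A x‖ ^ 2) := by
  refine ⟨convex_univ, fun x _ y _ a b ha hb hab => ?_⟩
  have h1 : ‖A (a • x + b • y)‖ ≤ a * ‖A x‖ + b * ‖A y‖ := by
    rw [Convex.combo_affine_apply hab]
    calc ‖a • A x + b • A y‖ ≤ ‖a • A x‖ + ‖b • A y‖ := norm_add_le _ _
      _ = a * ‖A x‖ + b * ‖A y‖ := by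
        rw [norm_smul, norm_smul, Real.norm_eq_abs, Real.norm_eq_abs,
          abs_of_nonneg ha, abs_of_nonneg hb]
  have h2 : ‖A (a • x + b • y)‖ ^ 2 ≤ (a * ‖A x‖ + b * ‖A y‖) ^ 2 :=
    pow_le_pow_left₀ (norm_nonneg _) h1 2
  refine h2.trans ?_
  have h3 := (convexOn_pow 2).2 (Set.mem_Ici.2 (norm_nonneg (A x)))
    (Set.mem_Ici.2 (norm_nonneg (A y))) ha hb hab
  simpa [smul_eq_mul] using h3

set_option synthInstance.maxHeartbeats 1000000 in
set_option maxHeartbeats 1000000 in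
/-- Let `H` be a real Hilbert space, `I` a nonempty finite index set and,
for every `i ∈ I`, `G i` a real Hilbert space, `V i` a closed linear subspace of `G i`,
`r i ∈ G i`, `L i : H → G i` a nonzero bounded linear operator and `α i > 0`.  Set
`h x = (1/2) ∑ i, α i * d_{V i}(L i x − r i)²`.  Then `h` is convex and Fréchet
differentiable with gradient `∇h(x) = ∑ i, α i • L i* (proj_{(V i)ᗮ} (L i x − r i))`,
and `∇h` is Lipschitz with constant `β = ∑ i, α i * ‖L i‖²`. -/
theorem stmt_0 {H : Type*} [NormedAddCommGroup H] [InnerProductSpace ℝ H] [CompleteSpace H]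
    {ι : Type*} [Fintype ι] [Nonempty ι]
    (G : ι → Type*) [∀ i, NormedAddCommGroup (G i)] [∀ i, InnerProductSpace ℝ (G i)]
    [∀ i, CompleteSpace (G i)]
    (V : ∀ i, Submodule ℝ (G i)) (hVclosed : ∀ i, IsClosed (V i : Set (G i)))
    [∀ i, CompleteSpace (V i)]
    (r : ∀ i, G i) (L : ∀ i, H →L[ℝ] G i) (hL : ∀ i, L i ≠ 0)
    (α : ι → ℝ) (hα : ∀ i, 0 < α i)
    (h : H → ℝ)
    (hdef : ∀ x, h x =
      (1 / 2) * ∑ i, α i * (Metric.infDist (L i x - r i) (V i : Set (G i))) ^ 2) :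
    ConvexOn ℝ Set.univ h ∧
    (∀ x, HasGradientAt h
      (∑ i, α i • ContinuousLinearMap.adjoint (L i)
        (((V i)ᗮ.orthogonalProjectionOnto (L i x - r i) : G i))) x) ∧
    LipschitzWith (Real.toNNReal (∑ i, α i * ‖L i‖ ^ 2))
      (fun x => ∑ i, α i • ContinuousLinearMap.adjoint (L i)
        (((V i)ᗮ.orthogonalProjectionOnto (L i x - r i) : G i))) := by
  classical
  set Q : ∀ i, G i →L[ℝ] G i :=
    fun i => (V i)ᗮ.subtypeL.comp (V i)ᗮ.orthogonalProjectionOnto with hQdef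
  have hQapp : ∀ i (z : G i), Q i z = ((V i)ᗮ.orthogonalProjectionOnto z : G i) := fun i z => rfl
  have hQnorm : ∀ i (z : G i), ‖Q i z‖ ≤ ‖z‖ := by
    intro i z
    rw [hQapp]
    calc ‖((V i)ᗮ.orthogonalProjectionOnto z : G i)‖ = ‖(V i)ᗮ.orthogonalProjectionOnto z‖ := rfl
    _ ≤ ‖(V i)ᗮ.orthogonalProjectionOnto‖ * ‖z‖ := (V i)ᗮ.orthogonalProjectionOnto.le_opNorm z
    _ ≤ 1 * ‖z‖ := mul_le_mul_of_nonneg_right (Submodule.orthogonalProjectionOnto_norm_le _) (norm_nonneg z)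
    _ = ‖z‖ := one_mul _
  have hh : h = fun x => ∑ i, (α i / 2) * ‖Q i (L i x - r i)‖ ^ 2 := by
    funext x
    rw [hdef, Finset.mul_sum]
    refine Finset.sum_congr rfl fun i _ => ?_
    rw [aux_infDist_eq, ← hQapp]
    ring
  -- Convexity
  have hconv : ConvexOn ℝ Set.univ h := by
    rw [hh]
    refine aux_convexOn_sum _ _ fun i _ => ?_
    set A : H →ᵃ[ℝ] G i :=
      ((Q i).comp (L i)).toLinearMap.toAffineMap + AffineMap.const ℝ H (-(Q i (r i))) with hA
    have hAapp : ∀ x, A x = Q i (L i x - r i) := by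
      intro x
      simp [hA, map_sub, sub_eq_add_neg]
    have hsq : ConvexOn ℝ Set.univ (fun x => ‖Q i (L i x - r i)‖ ^ 2) := by
      have := aux_convexOn_norm_sq A
      simpa [hAapp] using this
    have := hsq.smul (c := α i / 2) (div_nonneg (hα i).le (by norm_num))
    simpa [smul_eq_mul] using this
  refine ⟨hconv, ?_, ?_⟩
  · -- Gradient
    intro x
    have grad : ∀ i, HasFDerivAt (fun y => ‖Q i (L i y - r i)‖ ^ 2)
        (2 • (innerSL ℝ (Q i (L i x - r i))).comp ((Q i).comp (L i))) x := by
      intro i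
      have hfun : (fun y => Q i (L i y - r i)) =
          fun y => ((Q i).comp (L i)) y - Q i (r i) := by
        funext y; simp [map_sub]
      have h1 : HasFDerivAt (fun y => Q i (L i y - r i)) ((Q i).comp (L i)) x := by
        rw [hfun]
        exact (((Q i).comp (L i)).hasFDerivAt).sub_const _
      exact h1.norm_sq
    have hsum : HasFDerivAt (fun y => ∑ i, (α i / 2) * ‖Q i (L i y - r i)‖ ^ 2)
        (∑ i, (α i / 2) • (2 • (innerSL ℝ (Q i (L i x - r i))).comp ((Q i).comp (L i)))) x :=
      HasFDerivAt.fun_sum fun i _ => (grad i).const_mul (α i / 2)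
    rw [← hh] at hsum
    refine hasGradientAt_iff_hasFDerivAt.2 ?_
    refine hsum.congr_fderiv (Eq.symm ?_)
    apply ContinuousLinearMap.ext
    intro y
    simp only [InnerProductSpace.toDual_apply_apply, ContinuousLinearMap.sum_apply, sum_inner,
      ContinuousLinearMap.smul_apply, ContinuousLinearMap.comp_apply, innerSL_apply_apply,
      real_inner_smul_left]
    refine Finset.sum_congr rfl fun i _ => ?_
    rw [ContinuousLinearMap.adjoint_inner_left, hQapp, hQapp, ← aux_inner_proj]
    simp [smul_eq_mul]
    ring
  · -- Lipschitz
    set T : H →L[ℝ] H :=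
      ∑ i, α i • ((ContinuousLinearMap.adjoint (L i)).comp ((Q i).comp (L i))) with hT
    set F : H → H := fun x => ∑ i, α i • ContinuousLinearMap.adjoint (L i)
        (((V i)ᗮ.orthogonalProjectionOnto (L i x - r i) : G i)) with hF
    have hβ : (0:ℝ) ≤ ∑ i, α i * ‖L i‖ ^ 2 :=
      Finset.sum_nonneg fun i _ => mul_nonneg (hα i).le (by positivity)
    have hTnorm : ‖T‖ ≤ ∑ i, α i * ‖L i‖ ^ 2 := by
      refine (norm_sum_le _ _).trans ?_
      refine Finset.sum_le_sum fun i _ => ?_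
      have hns : ‖α i • ((ContinuousLinearMap.adjoint (L i)).comp ((Q i).comp (L i)))‖
          ≤ ‖α i‖ * ‖(ContinuousLinearMap.adjoint (L i)).comp ((Q i).comp (L i))‖ :=
        ContinuousLinearMap.opNorm_smul_le (α i) _
      refine hns.trans ?_
      rw [Real.norm_eq_abs, abs_of_pos (hα i)]
      refine mul_le_mul_of_nonneg_left ?_ (hα i).le
      calc ‖(ContinuousLinearMap.adjoint (L i)).comp ((Q i).comp (L i))‖
          ≤ ‖ContinuousLinearMap.adjoint (L i)‖ * ‖(Q i).comp (L i)‖ :=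
            ContinuousLinearMap.opNorm_comp_le _ _
        _ ≤ ‖L i‖ * ‖L i‖ := by
            rw [ContinuousLinearMap.adjoint.norm_map]
            refine mul_le_mul_of_nonneg_left ?_ (norm_nonneg _)
            refine ContinuousLinearMap.opNorm_le_bound _ (norm_nonneg _) fun z => ?_
            calc ‖((Q i).comp (L i)) z‖ = ‖Q i (L i z)‖ := rfl
              _ ≤ ‖L i z‖ := hQnorm i _
              _ ≤ ‖L i‖ * ‖z‖ := (L i).le_opNorm z
        _ = ‖L i‖ ^ 2 := (sq ‖L i‖).symm
    have hdiff : ∀ x y : H, F x - F y = T (x - y) := by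
      intro x y
      simp only [hF, hT, ContinuousLinearMap.sum_apply, ContinuousLinearMap.smul_apply,
        ContinuousLinearMap.comp_apply, ← Finset.sum_sub_distrib, ← smul_sub]
      refine Finset.sum_congr rfl fun i _ => ?_
      congr 1
      rw [← map_sub]
      congr 1
      rw [← hQapp i, ← hQapp i, ← map_sub, sub_sub_sub_cancel_right, ← map_sub]
    refine LipschitzWith.of_dist_le_mul fun x y => ?_
    rw [dist_eq_norm, dist_eq_norm, hdiff x y,
      Real.coe_toNNReal _ hβ]
    calc ‖T (x - y)‖ ≤ ‖T‖ * ‖x - y‖ := T.le_opNorm _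
      _ ≤ (∑ i, α i * ‖L i‖ ^ 2) * ‖x - y‖ :=
        mul_le_mul_of_nonneg_right hTnorm (norm_nonneg _)
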